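/- Every planar quasi-homogeneous polynomial vector field P of type t̂ = (t₁,t₂) and degree k admits a unique conservative–dissipative decomposition P = X_h + μ·D₀, where D₀ = (t₁x, t₂y), h is a quasi-homogeneous polynomial of type t̂ and degree k + t₁ + t₂, and μ is a quasi-homogeneous polynomial of type t̂ and degree k. Moreover h = (D₀ ∧ P)/(k + t₁ + t₂) and μ = div(P)/(k + t₁ + t₂). -/

import Mathlib

open MvPolynomial

def IsQH (t : Fin 2 → ℕ) (k : ℕ) (f : MvPolynomial (Fin 2) ℝ) : Prop :=
  ∀ (ε : ℝ) (x : Fin 2 → ℝ),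
    eval (fun i => ε ^ t i * x i) f = ε ^ k * eval x f

def IsQHVF (t : Fin 2 → ℕ) (k : ℕ) (F : Fin 2 → MvPolynomial (Fin 2) ℝ) : Prop :=
  ∀ j, IsQH t (k + t j) (F j)

/-- Planar Hamiltonian vector field `X_h = (−∂h/∂y, ∂h/∂x)`. -/
noncomputable def ham (h : MvPolynomial (Fin 2) ℝ) : Fin 2 → MvPolynomial (Fin 2) ℝ :=
  ![-(pderiv 1 h), pderiv 0 h]

/-- The vector field `D₀ = (t₁x, t₂y)`. -/
noncomputable def D0 (t : Fin 2 → ℕ) : Fin 2 → MvPolynomial (Fin 2) ℝ :=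
  ![C ((t 0 : ℝ)) * X 0, C ((t 1 : ℝ)) * X 1]

/-- Wedge product `(P,Q) ∧ (R,S) = PS − QR`. -/
noncomputable def wedge (F G : Fin 2 → MvPolynomial (Fin 2) ℝ) : MvPolynomial (Fin 2) ℝ :=
  F 0 * G 1 - F 1 * G 0

/-- Divergence of a planar vector field. -/
noncomputable def divg (F : Fin 2 → MvPolynomial (Fin 2) ℝ) : MvPolynomial (Fin 2) ℝ :=
  pderiv 0 (F 0) + pderiv 1 (F 1)

lemma wt_apply (t : Fin 2 → ℕ) (d : Fin 2 →₀ ℕ) :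
    Finsupp.weight t d = d 0 * t 0 + d 1 * t 1 := by
  rw [Finsupp.weight_apply, Finsupp.sum_fintype]
  · simp [Fin.sum_univ_two]
  · intro; simp

noncomputable def Phi (t : Fin 2 → ℕ) :
    MvPolynomial (Fin 2) ℝ →ₐ[ℝ] Polynomial (MvPolynomial (Fin 2) ℝ) :=
  aeval (fun i => Polynomial.X ^ t i * Polynomial.C (X i))

lemma Phi_monomial (t : Fin 2 → ℕ) (d : Fin 2 →₀ ℕ) (c : ℝ) :
    Phi t (monomial d c) =
      Polynomial.C (monomial d c) * Polynomial.X ^ (Finsupp.weight t d) := by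
  rw [Phi, aeval_monomial]
  rw [Finsupp.prod_fintype _ _ (fun i => pow_zero _)]
  rw [Fin.prod_univ_two, wt_apply]
  rw [show (monomial d c : MvPolynomial (Fin 2) ℝ) = C c * X 0 ^ d 0 * X 1 ^ d 1 by
    rw [monomial_eq, Finsupp.prod_fintype _ _ (fun i => pow_zero _), Fin.prod_univ_two]; ring]
  rw [mul_pow, mul_pow, ← Polynomial.C_pow, ← Polynomial.C_pow, ← pow_mul, ← pow_mul]
  have : (algebraMap ℝ (Polynomial (MvPolynomial (Fin 2) ℝ))) c = Polynomial.C (C c) := rfl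
  rw [this, pow_add, Polynomial.C_mul, Polynomial.C_mul]
  ring_nf

lemma prod_univ_of_support {M : Type*} [CommMonoid M] (d : Fin 2 →₀ ℕ) (g : Fin 2 → ℕ → M)
    (hg : ∀ i, g i 0 = 1) : ∏ i ∈ d.support, g i (d i) = ∏ i : Fin 2, g i (d i) :=
  Finset.prod_subset (Finset.subset_univ _)
    (fun i _ hi => by rw [Finsupp.notMem_support_iff.mp hi, hg])

lemma isQH_of_WH {t : Fin 2 → ℕ} {k : ℕ} {f : MvPolynomial (Fin 2) ℝ}
    (h : IsWeightedHomogeneous t f k) : IsQH t k f := by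
  intro ε x
  rw [eval_eq, eval_eq, Finset.mul_sum]
  refine Finset.sum_congr rfl fun d hd => ?_
  have hw := h (mem_support_iff.mp hd)
  rw [wt_apply] at hw
  rw [prod_univ_of_support d (fun i n => (ε ^ t i * x i) ^ n) (fun i => pow_zero _),
      prod_univ_of_support d (fun i n => (x i) ^ n) (fun i => pow_zero _)]
  rw [Fin.prod_univ_two, Fin.prod_univ_two, ← hw]
  rw [mul_pow, mul_pow, ← pow_mul, ← pow_mul, pow_add]
  ring

lemma eval_Phi (t : Fin 2 → ℕ) (f : MvPolynomial (Fin 2) ℝ) (ε : ℝ) (x : Fin 2 → ℝ) :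
    eval x (Polynomial.eval (C ε) (Phi t f)) = eval (fun i => ε ^ t i * x i) f := by
  have :
      ((eval x).comp ((Polynomial.evalRingHom (C ε)).comp (Phi t).toRingHom)) f
        = eval (fun i => ε ^ t i * x i) f := by
    refine congrFun (congrArg _ (MvPolynomial.ringHom_ext (fun r => ?_) (fun i => ?_))) f
    · simp [Phi]
    · simp [Phi]; ring
  simpa using this

lemma Phi_eq_of_isQH {t : Fin 2 → ℕ} {k : ℕ} {f : MvPolynomial (Fin 2) ℝ}
    (h : IsQH t k f) : Phi t f = Polynomial.C f * Polynomial.X ^ k := by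
  have h1 : ∀ ε : ℝ, Polynomial.eval (C ε) (Phi t f)
      = Polynomial.eval (C ε) (Polynomial.C f * Polynomial.X ^ k) := by
    intro ε
    apply MvPolynomial.funext
    intro x
    rw [eval_Phi, h ε x]
    simp only [Polynomial.eval_mul, Polynomial.eval_C, Polynomial.eval_pow, Polynomial.eval_X,
      map_mul, map_pow, eval_C]
    ring
  refine Polynomial.ext fun n => ?_
  apply MvPolynomial.funext
  intro x
  have h2 : (Phi t f).map (eval x) = (Polynomial.C f * Polynomial.X ^ k).map (eval x) := by
    apply Polynomial.funext
    intro ε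
    have e1 : ∀ p : Polynomial (MvPolynomial (Fin 2) ℝ),
        Polynomial.eval ε (p.map (eval x)) = eval x (Polynomial.eval (C ε) p) := by
      intro p
      rw [Polynomial.eval_map]
      rw [show Polynomial.eval (C ε) p = Polynomial.eval₂ (RingHom.id _) (C ε) p from rfl]
      rw [Polynomial.hom_eval₂]
      simp
    rw [e1, e1, h1]
  have := congrArg (fun p => Polynomial.coeff p n) h2
  simp only [Polynomial.coeff_map] at this
  rw [this]

lemma WH_of_isQH {t : Fin 2 → ℕ} {k : ℕ} {f : MvPolynomial (Fin 2) ℝ}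
    (h : IsQH t k f) : IsWeightedHomogeneous t f k := by
  intro d hd
  have key := Phi_eq_of_isQH h
  have hl : coeff d ((Phi t f).coeff (Finsupp.weight t d)) = coeff d f := by
    conv_lhs => rw [f.as_sum, map_sum]
    simp only [Phi_monomial]
    rw [Polynomial.finset_sum_coeff, MvPolynomial.coeff_sum]
    rw [Finset.sum_eq_single d]
    · simp [Polynomial.coeff_C_mul, Polynomial.coeff_X_pow, apply_ite (coeff d),
        coeff_monomial]
    · intro b _ hbd
      simp [Polynomial.coeff_C_mul, Polynomial.coeff_X_pow, apply_ite (coeff d),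
        coeff_monomial, hbd]
    · intro hds
      rw [mem_support_iff, not_not] at hds
      simp [Polynomial.coeff_C_mul, Polynomial.coeff_X_pow, apply_ite (coeff d),
        coeff_monomial, hds]
  rw [key] at hl
  by_contra hne
  rw [Polynomial.coeff_C_mul, Polynomial.coeff_X_pow, if_neg hne] at hl
  simp only [mul_zero, coeff_zero] at hl
  exact hd hl.symm


lemma X_mul_pderiv_monomial (i : Fin 2) (d : Fin 2 →₀ ℕ) (c : ℝ) :
    X i * pderiv i (monomial d c) = monomial d ((d i : ℝ) * c) := by
  rw [pderiv_monomial]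
  rcases Nat.eq_zero_or_pos (d i) with h0 | h1
  · simp [h0]
  · rw [show (X i : MvPolynomial (Fin 2) ℝ) = monomial (Finsupp.single i 1) 1 by
      rw [← X_pow_eq_monomial, pow_one]]
    rw [monomial_mul, one_mul]
    have hidx : Finsupp.single i 1 + (d - Finsupp.single i 1) = d := by
      ext j
      rcases eq_or_ne i j with rfl | hj
      · simp [Finsupp.single_apply]
        omega
      · simp [Finsupp.single_apply, hj]
    rw [hidx]
    congr 1
    ring

lemma single_add_sub {i : Fin 2} {d : Fin 2 →₀ ℕ} (h : d i ≠ 0) :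
    (d - Finsupp.single i 1) + Finsupp.single i 1 = d := by
  ext j
  rcases eq_or_ne i j with rfl | hj
  · simp [Finsupp.single_apply]
    omega
  · simp [Finsupp.single_apply, hj]

lemma euler {t : Fin 2 → ℕ} {k : ℕ} {f : MvPolynomial (Fin 2) ℝ}
    (h : IsWeightedHomogeneous t f k) :
    C (t 0 : ℝ) * (X 0 * pderiv 0 f) + C (t 1 : ℝ) * (X 1 * pderiv 1 f) = C (k : ℝ) * f := by
  conv_lhs => rw [f.as_sum, map_sum, map_sum, Finset.mul_sum, Finset.mul_sum, Finset.mul_sum,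
    Finset.mul_sum, ← Finset.sum_add_distrib]
  conv_rhs => rw [f.as_sum, Finset.mul_sum]
  refine Finset.sum_congr rfl fun d hd => ?_
  rw [X_mul_pderiv_monomial, X_mul_pderiv_monomial, C_mul_monomial, C_mul_monomial,
    C_mul_monomial, ← map_add]
  congr 1
  have hw := h (mem_support_iff.mp hd)
  rw [wt_apply] at hw
  have hc : ((d 0 * t 0 + d 1 * t 1 : ℕ) : ℝ) = (k : ℝ) := by rw [hw]
  push_cast at hc
  linear_combination coeff d f * hc

lemma WH_pderiv {t : Fin 2 → ℕ} {m : ℕ} {f : MvPolynomial (Fin 2) ℝ} (i : Fin 2)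
    (h : IsWeightedHomogeneous t f (m + t i)) :
    IsWeightedHomogeneous t (pderiv i f) m := by
  intro e he
  have hrw : pderiv i f = ∑ d ∈ f.support,
      monomial (d - Finsupp.single i 1) (coeff d f * (d i : ℝ)) := by
    conv_lhs => rw [f.as_sum, map_sum]
    exact Finset.sum_congr rfl fun d _ => pderiv_monomial
  rw [hrw, MvPolynomial.coeff_sum] at he
  obtain ⟨d, hd, hne⟩ := Finset.exists_ne_zero_of_sum_ne_zero he
  rw [coeff_monomial] at hne
  split_ifs at hne with heq
  · have hdi : d i ≠ 0 := by
      intro h0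
      rw [h0] at hne
      simp at hne
    have hwd := h (mem_support_iff.mp hd)
    have hsplit := congrArg (Finsupp.weight t) (single_add_sub hdi)
    rw [map_add] at hsplit
    have hsing : Finsupp.weight t (Finsupp.single i 1) = t i := by
      rw [Finsupp.weight_apply, Finsupp.sum_single_index] <;> simp
    rw [hsing, heq] at hsplit
    omega
  · exact absurd rfl hne

lemma pderiv_comm' (i j : Fin 2) (f : MvPolynomial (Fin 2) ℝ) :
    pderiv i (pderiv j f) = pderiv j (pderiv i f) := by
  rcases eq_or_ne i j with rfl | hij
  · rfl
  induction f using MvPolynomial.induction_on' with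
  | add p q hp hq => simp [hp, hq]
  | monomial d c =>
    rw [pderiv_monomial, pderiv_monomial, pderiv_monomial, pderiv_monomial]
    have hsub : d - Finsupp.single j 1 - Finsupp.single i 1
        = d - Finsupp.single i 1 - Finsupp.single j 1 := by
      ext l
      simp only [Finsupp.tsub_apply]
      omega
    have hi : ((d - Finsupp.single j 1 : Fin 2 →₀ ℕ)) i = d i := by
      simp [Finsupp.tsub_apply, Finsupp.single_apply, Ne.symm hij]
    have hj : ((d - Finsupp.single i 1 : Fin 2 →₀ ℕ)) j = d j := by
      simp [Finsupp.tsub_apply, Finsupp.single_apply, hij]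
    rw [hsub, hi, hj]
    ring_nf

lemma WH_neg {t : Fin 2 → ℕ} {m : ℕ} {f : MvPolynomial (Fin 2) ℝ}
    (h : IsWeightedHomogeneous t f m) : IsWeightedHomogeneous t (-f) m :=
  fun d hd => h (by rwa [coeff_neg, neg_ne_zero] at hd)

lemma WH_sub {t : Fin 2 → ℕ} {m : ℕ} {f g : MvPolynomial (Fin 2) ℝ}
    (hf : IsWeightedHomogeneous t f m) (hg : IsWeightedHomogeneous t g m) :
    IsWeightedHomogeneous t (f - g) m := by
  rw [sub_eq_add_neg]; exact hf.add (WH_neg hg)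

lemma WH_C_mul {t : Fin 2 → ℕ} {m : ℕ} {f : MvPolynomial (Fin 2) ℝ} (r : ℝ)
    (h : IsWeightedHomogeneous t f m) : IsWeightedHomogeneous t (C r * f) m := by
  simpa using (isWeightedHomogeneous_C t r).mul h


/-- Conservative–dissipative splitting: every planar quasi-homogeneous vector field
`P` of type `t̂` and degree `k` decomposes uniquely as `P = X_h + μ·D₀` with
`h ∈ 𝒫^{t̂}_{k+|t̂|}` and `μ ∈ 𝒫^{t̂}_k`; moreover `h = (D₀ ∧ P)/(k+|t̂|)` and
`μ = div(P)/(k+|t̂|)`. -/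
theorem conservative_dissipative_splitting (t : Fin 2 → ℕ) (ht : ∀ i, 0 < t i) (k : ℕ)
    (P : Fin 2 → MvPolynomial (Fin 2) ℝ) (hP : IsQHVF t k P) :
    (∃! hm : MvPolynomial (Fin 2) ℝ × MvPolynomial (Fin 2) ℝ,
        IsQH t (k + t 0 + t 1) hm.1 ∧ IsQH t k hm.2 ∧
          ∀ j, P j = ham hm.1 j + hm.2 * D0 t j) ∧
    (∀ h μ : MvPolynomial (Fin 2) ℝ,
        IsQH t (k + t 0 + t 1) h → IsQH t k μ → (∀ j, P j = ham h j + μ * D0 t j) →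
          h = C (((k + t 0 + t 1 : ℕ) : ℝ))⁻¹ * wedge (D0 t) P ∧
          μ = C (((k + t 0 + t 1 : ℕ) : ℝ))⁻¹ * divg P) := by
  set NR : ℝ := ((k + t 0 + t 1 : ℕ) : ℝ) with hNR
  have hNne : NR ≠ 0 := by
    have h0 := ht 0
    rw [hNR]
    exact_mod_cast (by omega : (k + t 0 + t 1 : ℕ) ≠ 0)
  have hinv : (C (NR⁻¹) : MvPolynomial (Fin 2) ℝ) * C NR = 1 := by
    rw [← C_mul, inv_mul_cancel₀ hNne, C_1]
  have hNsum : (C NR : MvPolynomial (Fin 2) ℝ)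
      = C ((k : ℕ) : ℝ) + C ((t 0 : ℕ) : ℝ) + C ((t 1 : ℕ) : ℝ) := by
    rw [hNR]; push_cast; rw [C_add, C_add]
  have hinv' : (C (NR⁻¹) : MvPolynomial (Fin 2) ℝ)
      * (C ((k : ℕ) : ℝ) + C ((t 0 : ℕ) : ℝ) + C ((t 1 : ℕ) : ℝ)) = 1 := by
    rw [← hNsum]; exact hinv
  have hwP : ∀ j, IsWeightedHomogeneous t (P j) (k + t j) := fun j => WH_of_isQH (hP j)
  -- Euler identities for P components, with split casts
  have e0 : C ((t 0 : ℕ) : ℝ) * (X 0 * pderiv 0 (P 0)) + C ((t 1 : ℕ) : ℝ)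
      * (X 1 * pderiv 1 (P 0))
      = (C ((k : ℕ) : ℝ) + C ((t 0 : ℕ) : ℝ)) * P 0 := by
    have := euler (hwP 0)
    rw [show (C ((k + t 0 : ℕ) : ℝ) : MvPolynomial (Fin 2) ℝ)
      = C ((k : ℕ) : ℝ) + C ((t 0 : ℕ) : ℝ) by push_cast; rw [C_add]] at this
    exact this
  have e1 : C ((t 0 : ℕ) : ℝ) * (X 0 * pderiv 0 (P 1)) + C ((t 1 : ℕ) : ℝ)
      * (X 1 * pderiv 1 (P 1))
      = (C ((k : ℕ) : ℝ) + C ((t 1 : ℕ) : ℝ)) * P 1 := by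
    have := euler (hwP 1)
    rw [show (C ((k + t 1 : ℕ) : ℝ) : MvPolynomial (Fin 2) ℝ)
      = C ((k : ℕ) : ℝ) + C ((t 1 : ℕ) : ℝ) by push_cast; rw [C_add]] at this
    exact this
  -- Part 2: characterization
  have part2 : ∀ h μ : MvPolynomial (Fin 2) ℝ,
      IsQH t (k + t 0 + t 1) h → IsQH t k μ → (∀ j, P j = ham h j + μ * D0 t j) →
        h = C (NR⁻¹) * wedge (D0 t) P ∧ μ = C (NR⁻¹) * divg P := by
    intro h μ hh hμ hdec
    have whh := WH_of_isQH hh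
    have whμ := WH_of_isQH hμ
    have eh := euler whh
    rw [show (C ((k + t 0 + t 1 : ℕ) : ℝ) : MvPolynomial (Fin 2) ℝ) = C NR by rw [hNR]] at eh
    have eμ := euler whμ
    have hd0 := hdec 0
    have hd1 := hdec 1
    simp only [ham, D0, Matrix.cons_val_zero, Matrix.cons_val_one, Matrix.head_cons] at hd0 hd1
    constructor
    · have key : wedge (D0 t) P = C NR * h := by
        simp only [wedge, D0, Matrix.cons_val_zero, Matrix.cons_val_one, Matrix.head_cons]
        rw [hd0, hd1]
        linear_combination eh
      rw [key, ← mul_assoc, hinv, one_mul]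
    · have key : divg P = C NR * μ := by
        simp only [divg]
        rw [hd0, hd1]
        simp only [map_add, map_neg, pderiv_mul, pderiv_C_mul, pderiv_C, pderiv_X_self,
          pderiv_X_of_ne (show (1 : Fin 2) ≠ 0 by decide),
          pderiv_X_of_ne (show (0 : Fin 2) ≠ 1 by decide), mul_one, mul_zero, add_zero]
        rw [hNsum]
        linear_combination eμ + pderiv_comm' 1 0 h
      rw [key, ← mul_assoc, hinv, one_mul]
  refine ⟨?_, part2⟩
  -- Part 1: existence and uniqueness
  set h₀ : MvPolynomial (Fin 2) ℝ := C (NR⁻¹) * wedge (D0 t) P with hh₀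
  set μ₀ : MvPolynomial (Fin 2) ℝ := C (NR⁻¹) * divg P with hμ₀
  have wh_h₀ : IsWeightedHomogeneous t h₀ (k + t 0 + t 1) := by
    apply WH_C_mul
    simp only [wedge, D0, Matrix.cons_val_zero, Matrix.cons_val_one, Matrix.head_cons]
    apply WH_sub
    · have := ((isWeightedHomogeneous_C t ((t 0 : ℕ) : ℝ)).mul
        (isWeightedHomogeneous_X ℝ t 0)).mul (hwP 1)
      rwa [show 0 + t 0 + (k + t 1) = k + t 0 + t 1 by omega] at this
    · have := ((isWeightedHomogeneous_C t ((t 1 : ℕ) : ℝ)).mul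
        (isWeightedHomogeneous_X ℝ t 1)).mul (hwP 0)
      rwa [show 0 + t 1 + (k + t 0) = k + t 0 + t 1 by omega] at this
  have wh_μ₀ : IsWeightedHomogeneous t μ₀ k := by
    apply WH_C_mul
    exact (WH_pderiv 0 (hwP 0)).add (WH_pderiv 1 (hwP 1))
  have comp0 : P 0 = ham h₀ 0 + μ₀ * D0 t 0 := by
    simp only [ham, D0, Matrix.cons_val_zero, Matrix.cons_val_one, Matrix.head_cons,
      hh₀, hμ₀, wedge, divg]
    simp only [Matrix.cons_val_zero, Matrix.cons_val_one, Matrix.head_cons,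
      map_sub, map_add, pderiv_mul, pderiv_C_mul, pderiv_C, pderiv_X_self,
      pderiv_X_of_ne (show (1 : Fin 2) ≠ 0 by decide),
      pderiv_X_of_ne (show (0 : Fin 2) ≠ 1 by decide), mul_one, mul_zero, add_zero, zero_mul,
      zero_add, mul_zero]
    linear_combination (-(C (NR⁻¹))) * e0 - P 0 * hinv'
  have comp1 : P 1 = ham h₀ 1 + μ₀ * D0 t 1 := by
    simp only [ham, D0, Matrix.cons_val_zero, Matrix.cons_val_one, Matrix.head_cons,
      hh₀, hμ₀, wedge, divg]
    simp only [Matrix.cons_val_zero, Matrix.cons_val_one, Matrix.head_cons,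
      map_sub, map_add, pderiv_mul, pderiv_C_mul, pderiv_C, pderiv_X_self,
      pderiv_X_of_ne (show (1 : Fin 2) ≠ 0 by decide),
      pderiv_X_of_ne (show (0 : Fin 2) ≠ 1 by decide), mul_one, mul_zero, add_zero, zero_mul,
      zero_add, mul_zero]
    linear_combination (-(C (NR⁻¹))) * e1 - P 1 * hinv'
  have hdec₀ : ∀ j, P j = ham h₀ j + μ₀ * D0 t j := by
    intro j
    fin_cases j
    · exact comp0
    · exact comp1
  refine ⟨(h₀, μ₀), ⟨isQH_of_WH wh_h₀, isQH_of_WH wh_μ₀, hdec₀⟩, ?_⟩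
  rintro ⟨h, μ⟩ ⟨hh, hμ, hdec⟩
  obtain ⟨ha, hb⟩ := part2 h μ hh hμ hdec
  exact Prod.ext ha hb
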